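/- arXiv:2001.02530 — 3 statements merged into one kernel-verified Lean document; each statement's English description precedes it below -/
import Mathlib

section
/- Let p_1, …, p_n be nonnegative real numbers and let C_1, …, C_n be reals satisfying C_j ≥ ∑_{i=1}^j p_i for every j. Then ∑_{j=1}^n p_j·C_j ≥ (1/2)·((∑_{i=1}^n p_i)² + ∑_{i=1}^n p_i²). -/
lemma key_identity (n : ℕ) (p : ℕ → ℝ) :
    ∑ j ∈ Finset.Icc 1 n, p j * ∑ i ∈ Finset.Icc 1 j, p i =
      (1 / 2) * ((∑ i ∈ Finset.Icc 1 n, p i) ^ 2 + ∑ i ∈ Finset.Icc 1 n, (p i) ^ 2) := by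
  induction n with
  | zero => simp
  | succ m ih =>
      simp only [Finset.sum_Icc_succ_top (Nat.le_add_left 1 m)]
      rw [ih]
      ring

/-- Inequality (4.4): if `C j ≥ ∑_{i=1}^j p i` for every `j` with `p i ≥ 0`, then
`∑_{j=1}^n p_j·C_j ≥ ½·((∑_{i=1}^n p_i)² + ∑_{i=1}^n p_i²)`. -/
theorem valid_inequality (n : ℕ) (p C : ℕ → ℝ)
    (hp : ∀ i ∈ Finset.Icc 1 n, 0 ≤ p i)
    (hC : ∀ j ∈ Finset.Icc 1 n, C j ≥ ∑ i ∈ Finset.Icc 1 j, p i) :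
    ∑ j ∈ Finset.Icc 1 n, p j * C j ≥
      (1 / 2) * ((∑ i ∈ Finset.Icc 1 n, p i) ^ 2 + ∑ i ∈ Finset.Icc 1 n, (p i) ^ 2) := by
  rw [← key_identity n p]
  exact Finset.sum_le_sum fun j hj =>
    mul_le_mul_of_nonneg_left (hC j hj) (hp j hj)
end

section
/- Let θ ≥ 0 and τ ≥ 0 be reals, let p_1, …, p_n be positive reals with τ ≤ θ·p_i for every i, let r_1, …, r_n be reals, and let C̄_1 ≤ C̄_2 ≤ … ≤ C̄_n be reals such that r_i ≤ C̄_i for every i and such that for every j, C̄_j · ∑_{i=1}^j p_i ≥ (1/2)·((∑_{i=1}^j p_i)² + ∑_{i=1}^j p_i²). Then for every j, max_{1 ≤ i ≤ j} r_i + ∑_{i=1}^j p_i + j·τ ≤ (3+2θ)·C̄_j. -/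
/-- Schedule-by-C̄ is a (3+2θ)-approximation: with positive processing times `p`,
`τ ≤ θ·pᵢ`, release dates `r i ≤ C i`, nondecreasing LP completion times `C`, and the
LP valid inequalities, for every `j`,
`max_{1 ≤ i ≤ j} rᵢ + ∑_{i=1}^j pᵢ + j·τ ≤ (3+2θ)·C j`. -/
theorem schedule_by_Cbar (n : ℕ) (θ τ : ℝ) (hθ : 0 ≤ θ) (hτ : 0 ≤ τ)
    (p r C : ℕ → ℝ)
    (hp : ∀ i ∈ Finset.Icc 1 n, 0 < p i)
    (hτp : ∀ i ∈ Finset.Icc 1 n, τ ≤ θ * p i)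
    (hmono : ∀ i ∈ Finset.Icc 1 n, ∀ j ∈ Finset.Icc 1 n, i ≤ j → C i ≤ C j)
    (hr : ∀ i ∈ Finset.Icc 1 n, r i ≤ C i)
    (hLP : ∀ j ∈ Finset.Icc 1 n,
      C j * (∑ i ∈ Finset.Icc 1 j, p i) ≥
        (1 / 2) * ((∑ i ∈ Finset.Icc 1 j, p i) ^ 2 + ∑ i ∈ Finset.Icc 1 j, (p i) ^ 2)) :
    ∀ j, ∀ hj : j ∈ Finset.Icc 1 n,
      (Finset.Icc 1 j).sup' (Finset.nonempty_Icc.mpr (Finset.mem_Icc.mp hj).1) r +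
        (∑ i ∈ Finset.Icc 1 j, p i) + (j : ℝ) * τ ≤ (3 + 2 * θ) * C j := by
  intro j hj
  obtain ⟨hj1, hjn⟩ := Finset.mem_Icc.mp hj
  have hsub : Finset.Icc 1 j ⊆ Finset.Icc 1 n := by
    intro i hi
    obtain ⟨h1, h2⟩ := Finset.mem_Icc.mp hi
    exact Finset.mem_Icc.mpr ⟨h1, h2.trans hjn⟩
  set S := ∑ i ∈ Finset.Icc 1 j, p i with hS
  have hSpos : 0 < S := Finset.sum_pos (fun i hi => hp i (hsub hi))
    (Finset.nonempty_Icc.mpr hj1)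
  -- S ≤ 2 * C j
  have hsq : 0 ≤ ∑ i ∈ Finset.Icc 1 j, (p i) ^ 2 :=
    Finset.sum_nonneg fun i _ => sq_nonneg _
  have hCS : C j * S ≥ (1 / 2) * S ^ 2 := by
    have := hLP j hj
    nlinarith
  have hS2C : S ≤ 2 * C j := by
    nlinarith
  have hCpos : 0 < C j := by nlinarith
  -- max r ≤ C j
  have hsup : (Finset.Icc 1 j).sup' (Finset.nonempty_Icc.mpr hj1) r ≤ C j := by
    apply Finset.sup'_le
    intro i hi
    have hi' := hsub hi
    exact (hr i hi').trans (hmono i hi' j hj (Finset.mem_Icc.mp hi).2)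
  -- j * τ ≤ θ * S
  have hjτ : (j : ℝ) * τ ≤ θ * S := by
    have : (j : ℝ) * τ = ∑ i ∈ Finset.Icc 1 j, τ := by
      rw [Finset.sum_const, Nat.card_Icc]
      simp [mul_comm]
    rw [this, hS, Finset.mul_sum]
    exact Finset.sum_le_sum fun i hi => hτp i (hsub hi)
  nlinarith
end

section
/- Fix integers k ≥ 2 and l ≥ 1. For n ∈ ℕ define f(n) = [ (knl·(knl+1))/2 + n²·l·(kn·(kn+1))/2 ] / [ (knl·(knl+1))/2 + n³·l·(k·(k+1))/2 ]. Then f(n) → ∞ as n → ∞. -/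
set_option maxHeartbeats 1000000 in
/-- Corollary 1: the ratio for the `l`-limited policy diverges, so it has no constant
competitive ratio. -/
theorem l_limited_no_constant_ratio (k l : ℕ) (hk : 2 ≤ k) (hl : 1 ≤ l) :
    Filter.Tendsto
      (fun n : ℕ =>
        (((k : ℝ) * n * l * ((k : ℝ) * n * l + 1)) / 2 +
            (n : ℝ) ^ 2 * l * ((k : ℝ) * n * ((k : ℝ) * n + 1)) / 2) /
          (((k : ℝ) * n * l * ((k : ℝ) * n * l + 1)) / 2 +
            (n : ℝ) ^ 3 * l * ((k : ℝ) * ((k : ℝ) + 1)) / 2))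
      Filter.atTop Filter.atTop := by
  have hk' : (2 : ℝ) ≤ (k : ℝ) := by exact_mod_cast hk
  have hl' : (1 : ℝ) ≤ (l : ℝ) := by exact_mod_cast hl
  have hkpos : (0 : ℝ) < k := by linarith
  have hlpos : (0 : ℝ) < l := by linarith
  have hmin : Filter.Tendsto (fun n : ℕ => (n : ℝ) / (4 * l)) Filter.atTop Filter.atTop := by
    apply Filter.Tendsto.atTop_div_const (by positivity)
    exact tendsto_natCast_atTop_atTop
  apply Filter.tendsto_atTop_mono' _ _ hmin
  filter_upwards [Filter.eventually_ge_atTop 1] with n hn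
  set x : ℝ := (n : ℝ) with hx
  clear_value x
  have hx1 : (1 : ℝ) ≤ x := by simp only [hx]; exact_mod_cast hn
  have hxpos : (0 : ℝ) < x := by linarith
  have key : x / (4 * l) =
      ((k : ℝ) ^ 2 * l * x ^ 4 / 2) / (2 * (k : ℝ) ^ 2 * l ^ 2 * x ^ 3) := by
    field_simp
    ring
  rw [key]
  apply div_le_div₀
  · positivity
  · nlinarith [mul_pos hkpos hxpos, sq_nonneg x, mul_pos (mul_pos hkpos hxpos) hlpos]
  · positivity
  · have hx23 : x ^ 2 ≤ x ^ 3 := by nlinarith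
    have h1 : (k:ℝ)^2 * l^2 * x^2 ≤ (k:ℝ)^2 * l^2 * x^3 :=
      mul_le_mul_of_nonneg_left hx23 (by positivity)
    have h2 : (k:ℝ) * x * l ≤ (k:ℝ)^2 * l^2 * x^3 := by
      have hge : (1:ℝ) ≤ (k:ℝ) * l * x^2 := by
        have hx2 : (1:ℝ) ≤ x^2 := by nlinarith
        have hkl : (1:ℝ) ≤ (k:ℝ) * l := by nlinarith
        nlinarith [mul_le_mul hkl hx2 zero_le_one (by linarith : (0:ℝ) ≤ (k:ℝ) * l)]
      have hm := mul_le_mul_of_nonneg_left hge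
        (le_of_lt (by positivity : (0:ℝ) < (k:ℝ) * x * l))
      nlinarith [hm]
    have h3 : x^3 * l * ((k:ℝ) * ((k:ℝ)+1)) ≤ 2 * (k:ℝ)^2 * l^2 * x^3 := by
      have hb : (0:ℝ) ≤ 2*(k:ℝ)*l - (k:ℝ) - 1 := by nlinarith
      have ha : (l:ℝ) * ((k:ℝ) * ((k:ℝ)+1)) ≤ 2 * (k:ℝ)^2 * l^2 := by
        nlinarith [mul_nonneg (mul_nonneg hlpos.le hkpos.le) hb]
      have hm := mul_le_mul_of_nonneg_left ha (le_of_lt (pow_pos hxpos 3))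
      nlinarith [hm]
    ring_nf at h1 h2 h3 ⊢
    linarith [h1, h2, h3]
end
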